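/- Let C be a PL(n,e)-code with e ≥ 2, and let s ≥ 1 be an integer. Then there exists a ∈ ℤ^n such that |(a + Λ(e,s)) ∩ C| ≥ |Λ(e,s)| / (|S(n,e)| − |S(n,e−2)|). -/

import Mathlib

/-- The Lee sphere `S(n,e) = {x ∈ ℤ^n : |x_1| + ⋯ + |x_n| ≤ e}`. -/
def LeeSphere (n e : ℕ) : Set (Fin n → ℤ) :=
  {x | (∑ i, |x i|) ≤ (e : ℤ)}

/-- A `PL(n,e)`-code: every point of `ℤ^n` is within Lee distance `e` of exactly one
codeword. -/
def IsPLCode (n e : ℕ) (C : Set (Fin n → ℤ)) : Prop :=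
  ∀ x : Fin n → ℤ, ∃! c, c ∈ C ∧ (∑ i, |x i - c i|) ≤ (e : ℤ)

/-- `Λ(e,s) = {x ∈ ℤ^n : |x_1| + ⋯ + |x_n| = e + 2, −s < x_i ≤ s for all i}`. -/
def Lambda (n e s : ℕ) : Set (Fin n → ℤ) :=
  {x | (∑ i, |x i|) = (e : ℤ) + 2 ∧ ∀ i, -(s : ℤ) < x i ∧ x i ≤ (s : ℤ)}

namespace PLAux
open Finset

variable {n : ℕ}

/-- Lee distance. -/
def wd (x y : Fin n → ℤ) : ℤ := ∑ i, |x i - y i|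

lemma wd_nonneg (x y : Fin n → ℤ) : 0 ≤ wd x y :=
  Finset.sum_nonneg fun i _ => abs_nonneg _

lemma wd_comm (x y : Fin n → ℤ) : wd x y = wd y x := by
  simp [wd, abs_sub_comm]

lemma wd_self (x : Fin n → ℤ) : wd x x = 0 := by simp [wd]

lemma wd_triangle (x y z : Fin n → ℤ) : wd x z ≤ wd x y + wd y z := by
  rw [wd, wd, wd, ← Finset.sum_add_distrib]
  exact Finset.sum_le_sum fun i _ => abs_sub_le _ _ _

lemma coord_le_wd (x y : Fin n → ℤ) (i : Fin n) : |x i - y i| ≤ wd x y :=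
  Finset.single_le_sum (f := fun i => |x i - y i|) (fun i _ => abs_nonneg _) (Finset.mem_univ i)

lemma wd_sub_left (c lam : Fin n → ℤ) : wd (c - lam) c = ∑ i, |lam i| := by
  rw [wd]; congr 1; funext i; simp [abs_sub_comm]

/-- One step along a geodesic from `y` towards `z`. -/
lemma step {y z : Fin n → ℤ} (hyz : y ≠ z) :
    ∃ x : Fin n → ℤ, wd x z = wd y z - 1 ∧ wd y x ≤ 1 := by
  obtain ⟨i, hi⟩ : ∃ i, y i ≠ z i := by
    by_contra h; push_neg at h; exact hyz (funext h)
  set v : ℤ := y i + if y i < z i then 1 else -1 with hv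
  refine ⟨Function.update y i v, ?_, ?_⟩
  · have hfun : (fun j => |Function.update y i v j - z j|) =
        Function.update (fun j => |y j - z j|) i |v - z i| := by
      funext j
      rcases eq_or_ne j i with rfl | hj
      · simp
      · simp [Function.update_of_ne hj]
    have habs : |v - z i| = |y i - z i| - 1 := by
      rcases lt_or_gt_of_ne hi with h | h
      · rw [hv, if_pos h, abs_of_nonpos (by omega), abs_of_neg (by omega)]; ring
      · rw [hv, if_neg (by omega), abs_of_nonneg (by omega), abs_of_pos (by omega)]; ring
    rw [wd, wd, hfun, Finset.sum_update_of_mem (Finset.mem_univ i), habs,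
      ← Finset.add_sum_erase _ (fun j => |y j - z j|) (Finset.mem_univ i)]
    simp [Finset.erase_eq]
  · have hfun : (fun j => |y j - Function.update y i v j|) =
        Function.update (fun j => |y j - y j|) i |y i - v| := by
      funext j
      rcases eq_or_ne j i with rfl | hj
      · simp
      · simp [Function.update_of_ne hj]
    rw [wd, hfun, Finset.sum_update_of_mem (Finset.mem_univ i)]
    have hyv : y i - v = -(if y i < z i then 1 else -1) := by rw [hv]; ring
    have h1 : |y i - v| = 1 := by
      rcases lt_or_ge (y i) (z i) with h | h
      · rw [hyv, if_pos h]; simp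
      · rw [hyv, if_neg (by omega)]; simp
    rw [h1]; simp

/-- The box of radius `M`. -/
noncomputable def boxF (n M : ℕ) : Finset (Fin n → ℤ) := Fintype.piFinset fun _ => Finset.Icc (-(M : ℤ)) M

lemma mem_boxF {M : ℕ} {x : Fin n → ℤ} : x ∈ boxF n M ↔ ∀ i, |x i| ≤ (M : ℤ) := by
  simp [boxF, Fintype.mem_piFinset, abs_le, Finset.mem_Icc]

lemma card_boxF (M : ℕ) : (boxF n M).card = (2 * M + 1) ^ n := by
  rw [boxF, Fintype.card_piFinset]
  have : (Finset.Icc (-(M : ℤ)) M).card = 2 * M + 1 := by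
    rw [Int.card_Icc]; omega
  simp [this]

/-- Bernoulli-type upper bound. -/
lemma pow_upper (k : ℕ) : ∀ A B : ℕ, A ≤ B → B ^ (k+1) ≤ A ^ (k+1) + (k+1) * (B - A) * B ^ k := by
  induction k with
  | zero => intro A B h; simp; omega
  | succ k ih =>
    intro A B h
    have h2 := ih A B h
    calc B ^ (k+1+1) = B * B ^ (k+1) := by ring
      _ ≤ B * (A ^ (k+1) + (k+1) * (B - A) * B ^ k) := Nat.mul_le_mul_left _ h2
      _ = B * A ^ (k+1) + (k+1) * (B - A) * (B * B ^ k) := by ring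
      _ = B * A ^ (k+1) + (k+1) * (B - A) * B ^ (k+1) := by ring
      _ ≤ A ^ (k+1+1) + (B - A) * A ^ (k+1) + (k+1) * (B - A) * B ^ (k+1) := by
          have : B * A ^ (k+1) = A * A ^ (k+1) + (B - A) * A ^ (k+1) := by
            rw [← Nat.add_mul]; congr 1; omega
          rw [this]; ring_nf; omega
      _ ≤ A ^ (k+1+1) + (B - A) * B ^ (k+1) + (k+1) * (B - A) * B ^ (k+1) := by
          have : (B - A) * A ^ (k+1) ≤ (B - A) * B ^ (k+1) :=
            Nat.mul_le_mul_left _ (Nat.pow_le_pow_left h _)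
          omega
      _ = A ^ (k+1+1) + (k+1+1) * (B - A) * B ^ (k+1) := by ring

/-- Separation: a point at distance `e+2` from a codeword is at distance `≥ e-1`
from every other codeword. -/
lemma sep {e : ℕ} {C : Set (Fin n → ℤ)} (hC : IsPLCode n e C) (he : 2 ≤ e)
    {c c' a : Fin n → ℤ} (hc : c ∈ C) (hc' : c' ∈ C) (hne : c' ≠ c)
    (ha : wd a c = (e : ℤ) + 2) : (e : ℤ) - 1 ≤ wd a c' := by
  by_contra h
  push_neg at h
  have ha0 : a ≠ c := by
    intro h'; rw [h', wd_self] at ha; omega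
  obtain ⟨x₁, hx₁c, hax₁⟩ := step ha0
  have hx₁0 : x₁ ≠ c := by
    intro h'; rw [h', wd_self] at hx₁c; omega
  obtain ⟨x₂, hx₂c, hx₁x₂⟩ := step hx₁0
  have h2 : wd x₂ c ≤ (e : ℤ) := by omega
  have h3 : wd x₂ c' ≤ (e : ℤ) := by
    have t1 := wd_triangle x₂ x₁ c'
    have t2 := wd_triangle x₁ a c'
    have e1 : wd x₂ x₁ ≤ 1 := by rw [wd_comm]; exact hx₁x₂
    have e2 : wd x₁ a ≤ 1 := by rw [wd_comm]; exact hax₁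
    omega
  exact hne ((hC x₂).unique ⟨hc', h3⟩ ⟨hc, h2⟩)

end PLAux

open PLAux Finset

/-- If `C` is a `PL(n,e)`-code with `e ≥ 2` and `s ≥ 1`, then some translate of `Λ(e,s)`
contains at least `|Λ(e,s)| / (|S(n,e)| − |S(n,e−2)|)` codewords. -/
theorem exists_translate_many_codewords (n e s : ℕ) (he : 2 ≤ e) (hs : 1 ≤ s)
    (C : Set (Fin n → ℤ)) (hC : IsPLCode n e C) :
    ∃ a : Fin n → ℤ,
      ((Lambda n e s).ncard : ℚ) /
          (((LeeSphere n e).ncard : ℚ) - ((LeeSphere n (e - 2)).ncard : ℚ)) ≤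
        ((((fun x => a + x) '' Lambda n e s) ∩ C).ncard : ℚ) := by
  classical
  by_cases hL0 : (Lambda n e s).ncard = 0
  · refine ⟨0, ?_⟩
    rw [hL0]
    simp only [Nat.cast_zero, zero_div]
    positivity
  -- nonempty case
  obtain ⟨x₀, hx₀⟩ : (Lambda n e s).Nonempty := Set.nonempty_of_ncard_ne_zero hL0
  have hn1 : 1 ≤ n := by
    by_contra hn
    have hn0 : n = 0 := by omega
    subst hn0
    have h1 : (∑ i : Fin 0, |x₀ i|) = (e : ℤ) + 2 := hx₀.1
    rw [show (Finset.univ : Finset (Fin 0)) = ∅ from rfl, Finset.sum_empty] at h1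
    omega
  -- covering function
  choose cov hcov using hC
  have covC : ∀ x, cov x ∈ C := fun x => (hcov x).1.1
  have covle : ∀ x, wd x (cov x) ≤ (e : ℤ) := fun x => (hcov x).1.2
  have covuniq : ∀ x c, c ∈ C → wd x c ≤ (e : ℤ) → c = cov x :=
    fun x c h1 h2 => (hcov x).2 c ⟨h1, h2⟩
  have hCcode : IsPLCode n e C := fun x =>
    ⟨cov x, ⟨covC x, covle x⟩, fun c hc => covuniq x c hc.1 hc.2⟩
  -- finset versions
  set ΛF := (boxF n s).filter (· ∈ Lambda n e s) with hΛFdef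
  have hΛiff : ∀ x, x ∈ ΛF ↔ x ∈ Lambda n e s := by
    intro x
    rw [hΛFdef, Finset.mem_filter]
    constructor
    · exact fun h => h.2
    · intro h
      refine ⟨mem_boxF.mpr fun i => ?_, h⟩
      have := h.2 i
      rw [abs_le]; omega
  have hΛcoe : Lambda n e s = ↑ΛF := by
    ext x; rw [Finset.mem_coe, hΛiff]
  have hΛcard : (Lambda n e s).ncard = ΛF.card := by
    rw [hΛcoe, Set.ncard_coe_finset]
  set Lc := ΛF.card with hLcdef
  have hLc1 : 1 ≤ Lc := by omega
  have hΛwt : ∀ x ∈ ΛF, (∑ i, |x i|) = (e : ℤ) + 2 := fun x hx => ((hΛiff x).mp hx).1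
  have hΛcoord : ∀ x ∈ ΛF, ∀ i, |x i| ≤ (e : ℤ) + 2 := by
    intro x hx i
    have h1 := hΛwt x hx
    have h2 : |x i| ≤ ∑ j, |x j| :=
      Finset.single_le_sum (f := fun j => |x j|) (fun j _ => abs_nonneg _) (Finset.mem_univ i)
    omega
  set SF : ℕ → Finset (Fin n → ℤ) := fun k => (boxF n k).filter (· ∈ LeeSphere n k) with hSFdef
  have hSiff : ∀ k x, x ∈ SF k ↔ x ∈ LeeSphere n k := by
    intro k x
    rw [hSFdef, Finset.mem_filter]
    constructor
    · exact fun h => h.2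
    · intro h
      refine ⟨mem_boxF.mpr fun i => ?_, h⟩
      have h1 : |x i| ≤ ∑ j, |x j| :=
        Finset.single_le_sum (f := fun j => |x j|) (fun j _ => abs_nonneg _) (Finset.mem_univ i)
      have h2 : (∑ j, |x j|) ≤ (k : ℤ) := h
      omega
  have hScard : ∀ k, (LeeSphere n k).ncard = (SF k).card := by
    intro k
    rw [show LeeSphere n k = ↑(SF k) by ext x; rw [Finset.mem_coe, hSiff], Set.ncard_coe_finset]
  have hsub : SF (e - 2) ⊆ SF e := by
    intro x hx
    rw [hSiff] at *
    have h1 : (∑ j, |x j|) ≤ ((e - 2 : ℕ) : ℤ) := hx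
    have h2 : ((e - 2 : ℕ) : ℤ) ≤ (e : ℤ) := by omega
    exact le_trans h1 h2
  set D := (SF e).card - (SF (e - 2)).card with hDdef
  have hDle : (SF (e - 2)).card ≤ (SF e).card := Finset.card_le_card hsub
  have hD1 : 1 ≤ D := by
    set i0 : Fin n := ⟨0, hn1⟩
    set z : Fin n → ℤ := fun j => if j = i0 then (e : ℤ) else 0 with hz
    have hw : (∑ j, |z j|) = (e : ℤ) := by
      rw [hz]
      simp [apply_ite (abs : ℤ → ℤ), abs_of_nonneg (by positivity : (0:ℤ) ≤ (e:ℤ))]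
    have hz1 : z ∈ SF e := (hSiff e z).mpr (le_of_eq hw)
    have hz2 : z ∉ SF (e - 2) := by
      intro hmem
      have h1 : (∑ j, |z j|) ≤ ((e - 2 : ℕ) : ℤ) := (hSiff _ z).mp hmem
      rw [hw] at h1; omega
    have := Finset.card_lt_card ((Finset.ssubset_iff_of_subset hsub).mpr ⟨z, hz1, hz2⟩)
    omega
  have hden : ((LeeSphere n e).ncard : ℚ) - ((LeeSphere n (e - 2)).ncard : ℚ) = (D : ℚ) := by
    rw [hScard, hScard, hDdef, Nat.cast_sub hDle]
  by_contra hcon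
  push_neg at hcon
  have hbound : ∀ a : Fin n → ℤ,
      ((((fun x => a + x) '' Lambda n e s) ∩ C).ncard) * D ≤ Lc - 1 := by
    intro a
    have h1 := hcon a
    rw [hΛcard, hden] at h1
    have hDpos : (0 : ℚ) < (D : ℚ) := by exact_mod_cast hD1
    rw [lt_div_iff₀ hDpos] at h1
    have h2 : ((((fun x => a + x) '' Lambda n e s) ∩ C).ncard) * D < Lc := by exact_mod_cast h1
    omega
  have hGfin : ∀ a : Fin n → ℤ, (((fun x => a + x) '' Lambda n e s) ∩ C).Finite := by
    intro a
    apply Set.Finite.inter_of_left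
    apply Set.Finite.image
    rw [hΛcoe]; exact ΛF.finite_toSet
  set m := (Lc - 1) / D with hmdef
  have hmD : m * D ≤ Lc - 1 := Nat.div_mul_le_self _ _
  have hGm : ∀ a : Fin n → ℤ, (((fun x => a + x) '' Lambda n e s) ∩ C).ncard ≤ m := fun a =>
    (Nat.le_div_iff_mul_le (by omega : 0 < D)).mpr (hbound a)
  set CF : ℕ → Finset (Fin n → ℤ) := fun L => (boxF n L).filter (· ∈ C) with hCFdef
  have hCFiff : ∀ (L : ℕ) (x : Fin n → ℤ), x ∈ CF L ↔ (∀ i, |x i| ≤ (L : ℤ)) ∧ x ∈ C := by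
    intro L x
    rw [hCFdef]
    simp [Finset.mem_filter, mem_boxF]
  have key1 : ∀ L : ℕ, (CF L).card * Lc ≤ (Lc - 1) * (CF (L + 2*e + 2)).card := by
    intro L
    set P := (CF L) ×ˢ ΛF with hPdef
    set f : (Fin n → ℤ) × (Fin n → ℤ) → (Fin n → ℤ) := fun p => p.1 - p.2 with hfdef
    have hfiber : ∀ a ∈ P.image f, (P.filter (fun p => f p = a)).card ≤ m := by
      intro a _
      have hcard : (P.filter (fun p => f p = a)).card ≤ (hGfin a).toFinset.card := by
        apply Finset.card_le_card_of_injOn (fun p => p.1)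
        · intro p hp
          rw [Finset.mem_coe, Finset.mem_filter, hPdef, Finset.mem_product] at hp
          obtain ⟨⟨hp1, hp2⟩, hp3⟩ := hp
          have hp3' : p.1 - p.2 = a := hp3
          simp only [Finset.mem_coe, Set.Finite.mem_toFinset]
          constructor
          · refine ⟨p.2, (hΛiff _).mp hp2, ?_⟩
            show a + p.2 = p.1
            rw [← hp3']; ring
          · exact ((hCFiff L p.1).mp hp1).2
        · intro p hp q hq hpq
          simp only [Finset.mem_coe, Finset.mem_filter] at hp hq
          have e1 : p.1 - p.2 = a := hp.2
          have e2 : q.1 - q.2 = a := hq.2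
          have hpq1 : p.1 = q.1 := hpq
          have h2 : p.2 = q.2 := by
            calc p.2 = p.1 - a := by rw [← e1]; ring
              _ = q.1 - a := by rw [hpq1]
              _ = q.2 := by rw [← e2]; ring
          exact Prod.ext hpq1 h2
      rw [← Set.ncard_eq_toFinset_card _ (hGfin a)] at hcard
      exact le_trans hcard (hGm a)
    have h1 : P.card ≤ m * (P.image f).card := Finset.card_le_mul_card_image _ _ hfiber
    have h2 : (P.image f).card ≤ D * (CF (L + 2*e + 2)).card := by
      apply Finset.card_le_mul_card_image_of_maps_to (f := cov) ?_ D ?_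
      · -- maps to
        intro a ha
        rw [Finset.mem_image] at ha
        obtain ⟨p, hp, rfl⟩ := ha
        rw [hPdef, Finset.mem_product] at hp
        obtain ⟨hp1, hp2⟩ := hp
        rw [hCFiff]
        refine ⟨fun i => ?_, covC _⟩
        have t0 : f p = p.1 - p.2 := rfl
        have t1 : |p.1 i| ≤ (L : ℤ) := ((hCFiff L p.1).mp hp1).1 i
        have t2 : |p.2 i| ≤ (e : ℤ) + 2 := hΛcoord p.2 hp2 i
        have t3 : |f p i - cov (f p) i| ≤ wd (f p) (cov (f p)) := coord_le_wd _ _ i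
        have t4 := covle (f p)
        have t5 : f p i = p.1 i - p.2 i := by rw [t0]; rfl
        have t6 : |cov (f p) i| - |f p i| ≤ |cov (f p) i - f p i| := abs_sub_abs_le_abs_sub _ _
        have t7 : |cov (f p) i - f p i| = |f p i - cov (f p) i| := abs_sub_comm _ _
        have t8 : |f p i| ≤ |p.1 i| + |p.2 i| := by rw [t5]; exact abs_sub _ _
        push_cast
        linarith
      · -- fiber bound: each fiber lands in the annulus around c'
        intro c' hc'
        have hc'C : c' ∈ C := ((hCFiff _ c').mp hc').2
        have hsubAnn : ((P.image f).filter (fun a => cov a = c')) ⊆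
            ((SF e) \ (SF (e-2))).image (fun r => c' + r) := by
          intro a ha
          rw [Finset.mem_filter] at ha
          obtain ⟨haA, hacov⟩ := ha
          rw [Finset.mem_image] at haA
          obtain ⟨p, hp, hfp⟩ := haA
          rw [hPdef, Finset.mem_product] at hp
          have hc1 : p.1 ∈ C := ((hCFiff L p.1).mp hp.1).2
          have hwda : wd a p.1 = (e : ℤ) + 2 := by
            rw [← hfp]
            show wd (p.1 - p.2) p.1 = (e : ℤ) + 2
            rw [wd_sub_left]
            exact hΛwt p.2 hp.2
          have hup : wd a c' ≤ (e : ℤ) := by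
            have := covle a
            rw [hacov] at this
            exact this
          have hne : c' ≠ p.1 := by
            intro hEq
            rw [hEq] at hup
            omega
          have hlow : (e : ℤ) - 1 ≤ wd a c' := sep hCcode he hc1 hc'C hne hwda
          rw [Finset.mem_image]
          refine ⟨a - c', ?_, by ring⟩
          rw [Finset.mem_sdiff]
          constructor
          · rw [hSiff]
            show (∑ i, |(a - c') i|) ≤ (e : ℤ)
            simpa [wd] using hup
          · intro hmem
            have hm1 : (∑ i, |(a - c') i|) ≤ ((e - 2 : ℕ) : ℤ) := (hSiff _ _).mp hmem
            have hm2 : (∑ i, |(a - c') i|) = wd a c' := by simp [wd]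
            omega
        calc ((P.image f).filter (fun a => cov a = c')).card
            ≤ (((SF e) \ (SF (e-2))).image (fun r => c' + r)).card := Finset.card_le_card hsubAnn
          _ = ((SF e) \ (SF (e-2))).card :=
              Finset.card_image_of_injective _ (add_right_injective c')
          _ = D := by rw [Finset.card_sdiff_of_subset hsub]
    calc (CF L).card * Lc = P.card := by rw [hPdef, Finset.card_product]
      _ ≤ m * (P.image f).card := h1
      _ ≤ m * (D * (CF (L + 2*e + 2)).card) := Nat.mul_le_mul_left _ h2
      _ = (m * D) * (CF (L + 2*e + 2)).card := by ring
      _ ≤ (Lc - 1) * (CF (L + 2*e + 2)).card := Nat.mul_le_mul_right _ hmD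
  have key2 : ∀ M : ℕ, (2*M+1)^n ≤ (CF (M + e)).card * (SF e).card := by
    intro M
    have hinj : (boxF n M).card ≤ ((CF (M+e)) ×ˢ (SF e)).card := by
      apply Finset.card_le_card_of_injOn (fun x => (cov x, x - cov x))
      · intro x hx
        rw [Finset.mem_coe, mem_boxF] at hx
        simp only [Finset.mem_coe, Finset.mem_product]
        constructor
        · rw [hCFiff]
          refine ⟨fun i => ?_, covC x⟩
          have t1 : |x i - cov x i| ≤ wd x (cov x) := coord_le_wd x (cov x) i
          have t2 := covle x
          have t3 : |cov x i| - |x i| ≤ |cov x i - x i| := abs_sub_abs_le_abs_sub _ _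
          have t4 : |cov x i - x i| = |x i - cov x i| := abs_sub_comm _ _
          have t5 := hx i
          push_cast
          linarith
        · rw [hSiff]
          show (∑ i, |(x - cov x) i|) ≤ (e : ℤ)
          simpa [wd] using covle x
      · intro x hx y hy hxy
        have h1 : cov x = cov y := congrArg Prod.fst hxy
        have h2 : x - cov x = y - cov y := congrArg Prod.snd hxy
        calc x = (x - cov x) + cov x := by ring
          _ = (y - cov y) + cov y := by rw [h2, h1]
          _ = y := by ring
    rw [card_boxF, Finset.card_product] at hinj
    exact hinj
  have key3 : ∀ M : ℕ, (CF M).card * (SF e).card ≤ (2*(M+e)+1)^n := by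
    intro M
    have hinj : ((CF M) ×ˢ (SF e)).card ≤ (boxF n (M+e)).card := by
      apply Finset.card_le_card_of_injOn (fun p => p.1 + p.2)
      · intro p hp
        rw [Finset.mem_coe, Finset.mem_product] at hp
        obtain ⟨hp1, hp2⟩ := hp
        rw [hCFiff] at hp1
        have hp2' : (∑ j, |p.2 j|) ≤ (e : ℤ) := (hSiff e p.2).mp hp2
        simp only [Finset.mem_coe, mem_boxF]
        intro i
        have t1 : |p.2 i| ≤ ∑ j, |p.2 j| :=
          Finset.single_le_sum (f := fun j => |p.2 j|) (fun j _ => abs_nonneg _) (Finset.mem_univ i)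
        have t2 := hp1.1 i
        have t3 : |p.1 i + p.2 i| ≤ |p.1 i| + |p.2 i| := abs_add_le _ _
        have t4 : (p.1 + p.2) i = p.1 i + p.2 i := rfl
        rw [t4]
        push_cast
        linarith
      · intro p hp q hq hpq
        simp only [Finset.mem_coe, Finset.mem_product] at hp hq
        have hx : p.1 + p.2 = q.1 + q.2 := hpq
        have hwp : wd (p.1 + p.2) p.1 ≤ (e : ℤ) := by
          have : wd (p.1 + p.2) p.1 = ∑ j, |p.2 j| := by
            rw [wd]; congr 1; funext j; simp
          rw [this]
          exact (hSiff e p.2).mp hp.2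
        have hwq : wd (q.1 + q.2) q.1 ≤ (e : ℤ) := by
          have : wd (q.1 + q.2) q.1 = ∑ j, |q.2 j| := by
            rw [wd]; congr 1; funext j; simp
          rw [this]
          exact (hSiff e q.2).mp hq.2
        have hpC : p.1 ∈ C := ((hCFiff M p.1).mp hp.1).2
        have hqC : q.1 ∈ C := ((hCFiff M q.1).mp hq.1).2
        have e1 : p.1 = cov (p.1 + p.2) := covuniq _ _ hpC hwp
        have e2 : q.1 = cov (p.1 + p.2) := by
          rw [hx]; exact covuniq _ _ hqC hwq
        have h1 : p.1 = q.1 := by rw [e1, e2]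
        have h2 : p.2 = q.2 := by
          have := hx
          rw [h1] at this
          exact add_left_cancel this
        exact Prod.ext h1 h2
    rw [card_boxF, Finset.card_product] at hinj
    exact hinj
  -- final assembly
  obtain ⟨k, hk⟩ : ∃ k, n = k + 1 := ⟨n - 1, by omega⟩
  set M := Lc * n * (8*e + 4) with hMdef
  have h1 := key2 M
  have h2 := key1 (M + e)
  have h3 := key3 (M + 3*e + 2)
  have hchain : Lc * (2*M+1)^n ≤ (Lc - 1) * (2*((M + 3*e + 2)+e)+1)^n := by
    calc Lc * (2*M+1)^n ≤ Lc * ((CF (M+e)).card * (SF e).card) := Nat.mul_le_mul_left _ h1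
      _ = ((CF (M+e)).card * Lc) * (SF e).card := by ring
      _ ≤ ((Lc - 1) * (CF (M + e + 2*e + 2)).card) * (SF e).card := Nat.mul_le_mul_right _ h2
      _ = (Lc - 1) * ((CF (M + 3*e + 2)).card * (SF e).card) := by ring_nf
      _ ≤ (Lc - 1) * (2*((M + 3*e + 2)+e)+1)^n := Nat.mul_le_mul_left _ h3
  set A := 2*M+1 with hAdef
  set B := 2*((M + 3*e + 2)+e)+1 with hBdef
  have hAB : A ≤ B := by omega
  rw [hk] at hchain
  have hpow := pow_upper k A B hAB
  have h4 : Lc * B^(k+1) ≤ (Lc-1) * B^(k+1) + Lc * ((k+1)*(B-A)*B^k) := by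
    calc Lc * B^(k+1) ≤ Lc * (A^(k+1) + (k+1)*(B-A)*B^k) := Nat.mul_le_mul_left _ hpow
      _ = Lc * A^(k+1) + Lc * ((k+1)*(B-A)*B^k) := by ring
      _ ≤ (Lc-1)*B^(k+1) + Lc * ((k+1)*(B-A)*B^k) := Nat.add_le_add_right hchain _
  have e1 : Lc * B^(k+1) = (Lc-1) * B^(k+1) + B^(k+1) := by
    conv_lhs => rw [show Lc = (Lc-1)+1 from by omega]
    rw [Nat.add_mul, one_mul]
  have h5 : B^(k+1) ≤ Lc * ((k+1)*(B-A)*B^k) := by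
    rw [e1] at h4
    exact Nat.le_of_add_le_add_left h4
  have h6 : B ≤ Lc * ((k+1)*(B-A)) := by
    have hBk : 0 < B^k := Nat.pow_pos (by omega)
    have h7 : B * B^k ≤ (Lc * ((k+1)*(B-A))) * B^k := by
      calc B * B^k = B^(k+1) := by ring
        _ ≤ Lc * ((k+1)*(B-A)*B^k) := h5
        _ = (Lc * ((k+1)*(B-A))) * B^k := by ring
    exact Nat.le_of_mul_le_mul_right h7 hBk
  have hBA : B - A = 8*e + 4 := by omega
  rw [hBA] at h6
  have hM2 : M = Lc * ((k+1) * (8*e+4)) := by rw [hMdef, hk]; ring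
  rw [← hM2] at h6
  omega
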